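/- Let μ ∈ Xf be n-deep in C₀ and s ∈ Wf. Then the set {λ ∈ X₁ : (w, λ + η) ∼ (s, μ + η) for some w ∈ Wf}, taken modulo the equivalence λ ≡ λ′ iff λ − λ′ ∈ (p − π)X⁰ := {pξ − πξ : ξ ∈ X⁰}, has exactly (n!)^f elements. (Equivalently, the set of obvious Serre weights of a tame Galois representation with n-deep lowest alcove presentation (s, μ) has cardinality (n!)^f, via a bijection with Wf.) -/

import Mathlib

/-!
Common setup: the extended affine Weyl group of `GL_n` (f-fold product), its dot
action on `(ℝ^n)^f`, p-alcoves, lengths, Bruhat orders (dominant and antidominant),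
the up (↑) order, admissible sets, and the combinatorics of lowest alcove
presentations, following Le–Le Hung–Levin, "Weight elimination in Serre-type
conjectures".
-/

noncomputable section

namespace LLLSerre

open scoped BigOperators

/-- `η₀ = (n-1, n-2, …, 1, 0)`. -/
def eta0 (n : ℕ) : Fin n → ℤ := fun i => (n : ℤ) - 1 - (i : ℤ)

/-- The action of a permutation on a vector: `(σ x) i = x (σ⁻¹ i)`. -/
def permAct {n : ℕ} {α : Type*} (σ : Equiv.Perm (Fin n)) (x : Fin n → α) : Fin n → α :=
  fun i => x (σ⁻¹ i)

/-- The weight lattice `Xf = (ℤ^n)^f`. -/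
abbrev Xf (n f : ℕ) := Fin f → Fin n → ℤ

/-- The f-fold product of Weyl groups `Wf = (S_n)^f`. -/
abbrev WfG (n f : ℕ) := Fin f → Equiv.Perm (Fin n)

/-- Points of `(ℝ^n)^f`. -/
abbrev RPt (n f : ℕ) := Fin f → Fin n → ℝ

/-- The extended affine Weyl group `Wtf = (X ⋊ W)^f`; the pair `(w, ν)` represents
`w t_ν`. -/
structure Wtf (n f : ℕ) where
  w : WfG n f
  t : Xf n f

/-- Multiplication in `Wtf`: `(w₁ t_{ν₁})(w₂ t_{ν₂}) = w₁w₂ t_{ν₂ + w₂⁻¹(ν₁)}`. -/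
def Wtf.mul {n f : ℕ} (a b : Wtf n f) : Wtf n f :=
  ⟨fun j => a.w j * b.w j, fun j => b.t j + permAct (b.w j)⁻¹ (a.t j)⟩

/-- Inversion in `Wtf`: `(w t_ν)⁻¹ = w⁻¹ t_{-w(ν)}`. -/
def Wtf.inv {n f : ℕ} (a : Wtf n f) : Wtf n f :=
  ⟨fun j => (a.w j)⁻¹, fun j => -(permAct (a.w j) (a.t j))⟩

/-- Embedding of the finite Weyl group `Wf` in `Wtf`. -/
def ofW {n f : ℕ} (w : WfG n f) : Wtf n f := ⟨w, fun _ _ => 0⟩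

/-- The translation `t_ν ∈ Wtf`. -/
def transl {n f : ℕ} (ν : Xf n f) : Wtf n f := ⟨fun _ => 1, ν⟩

/-- `η = (η₀, …, η₀) ∈ Xf`. -/
def etaf (n f : ℕ) : Xf n f := fun _ => eta0 n

/-- The longest element `w₀ ∈ Wf`. -/
def w0f (n f : ℕ) : WfG n f := fun _ => Fin.revPerm

/-- `w₀` as an element of `Wtf`. -/
def w0Elt (n f : ℕ) : Wtf n f := ofW (w0f n f)

/-- `w̃_h = w₀ t_{-η} ∈ Wtf`. -/
def whElt (n f : ℕ) : Wtf n f := ⟨w0f n f, fun _ i => -(eta0 n i)⟩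

/-- The dot action of `Wtf` on `(ℝ^n)^f`: `(w t_ν) · x = w(x + η + pν) − η`. -/
def dotR {n f : ℕ} (p : ℕ) (a : Wtf n f) (x : RPt n f) : RPt n f :=
  fun j i =>
    (x j ((a.w j)⁻¹ i) + ((eta0 n ((a.w j)⁻¹ i) : ℤ) : ℝ)
      + (p : ℝ) * ((a.t j ((a.w j)⁻¹ i) : ℤ) : ℝ)) - ((eta0 n i : ℤ) : ℝ)

/-- The dot action of `Wtf` on integral weights. -/
def dotZ {n f : ℕ} (p : ℕ) (a : Wtf n f) (lam : Xf n f) : Xf n f :=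
  fun j i =>
    (lam j ((a.w j)⁻¹ i) + eta0 n ((a.w j)⁻¹ i) + (p : ℤ) * a.t j ((a.w j)⁻¹ i)) - eta0 n i

/-- `⟨x_j + η₀, α_{ik}^∨⟩` for a real point `x`. -/
def prR {n f : ℕ} (x : RPt n f) (j : Fin f) (i k : Fin n) : ℝ :=
  (x j i + ((eta0 n i : ℤ) : ℝ)) - (x j k + ((eta0 n k : ℤ) : ℝ))

/-- `⟨λ_j + η₀, α_{ik}^∨⟩` for a weight `λ`. -/
def prZ {n f : ℕ} (lam : Xf n f) (j : Fin f) (i k : Fin n) : ℤ :=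
  (lam j i + eta0 n i) - (lam j k + eta0 n k)

/-- A point is (p-)regular if it lies on none of the affine hyperplanes
`⟨x_j + η₀, α^∨⟩ = pm`. -/
def regular {n f : ℕ} (p : ℕ) (x : RPt n f) : Prop :=
  ∀ (j : Fin f) (i k : Fin n) (m : ℤ), i < k → prR x j i k ≠ (p : ℝ) * (m : ℝ)

/-- Two regular points lie in the same p-alcove (same side of every hyperplane). -/
def sameAlcove {n f : ℕ} (p : ℕ) (x y : RPt n f) : Prop :=
  regular p x ∧ regular p y ∧
    ∀ (j : Fin f) (i k : Fin n) (m : ℤ), i < k →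
      (prR x j i k < (p : ℝ) * (m : ℝ) ↔ prR y j i k < (p : ℝ) * (m : ℝ))

/-- The root `α_{ik} = e_i - e_k` as a real vector. -/
def rootR {n : ℕ} (i k i' : Fin n) : ℝ :=
  (if i' = i then (1 : ℝ) else 0) - (if i' = k then (1 : ℝ) else 0)

/-- The affine reflection across the hyperplane `⟨x_j + η₀, α_{ik}^∨⟩ = pm`:
it replaces `x_j` by `x_j − (⟨x_j + η₀, α_{ik}^∨⟩ − pm) α_{ik}`. -/
def reflPt {n f : ℕ} (p : ℕ) (j : Fin f) (i k : Fin n) (m : ℤ) (x : RPt n f) : RPt n f :=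
  fun j' i' =>
    if j' = j then x j' i' - (prR x j i k - (p : ℝ) * (m : ℝ)) * rootR i k i' else x j' i'

/-- The origin, a point of the base alcove `C₀` (when `p > n`). -/
def basePt (n f : ℕ) : RPt n f := fun _ _ => 0

/-- The hyperplane indexed by `(j, i, k, m)` separates `x` from `y`. -/
def separates {n f : ℕ} (p : ℕ) (x y : RPt n f) (j : Fin f) (i k : Fin n) (m : ℤ) : Prop :=
  (prR x j i k < (p : ℝ) * (m : ℝ) ∧ (p : ℝ) * (m : ℝ) < prR y j i k) ∨
  (prR y j i k < (p : ℝ) * (m : ℝ) ∧ (p : ℝ) * (m : ℝ) < prR x j i k)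

/-- The length of `a ∈ Wtf` measured from the alcove of the base point `x`:
the number of hyperplanes separating the alcove of `x` from its image under `a`. -/
def lenFrom {n f : ℕ} (p : ℕ) (x : RPt n f) (a : Wtf n f) : ℕ :=
  Set.ncard {q : Fin f × Fin n × Fin n × ℤ |
    q.2.1 < q.2.2.1 ∧ separates p x (dotR p a x) q.1 q.2.1 q.2.2.1 q.2.2.2}

/-- Length relative to the dominant base alcove `C₀`. -/
def len {n f : ℕ} (p : ℕ) (a : Wtf n f) : ℕ := lenFrom p (basePt n f) a

/-- A point of the antidominant base alcove `w₀ · C₀`. -/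
def antiBasePt (n f p : ℕ) : RPt n f := dotR p (w0Elt n f) (basePt n f)

/-- Length relative to the antidominant base alcove `w₀ · C₀`. -/
def lenV {n f : ℕ} (p : ℕ) (a : Wtf n f) : ℕ := lenFrom p (antiBasePt n f p) a

/-- The affine Weyl group `Waf = (Λ_R ⋊ W)^f ⊆ Wtf`. -/
def Waf (n f : ℕ) : Set (Wtf n f) := {a | ∀ j, (∑ i, a.t j i) = 0}

/-- The stabilizer `Ωf` of the dominant base alcove `C₀`. -/
def Omegaf (n f p : ℕ) : Set (Wtf n f) :=
  {a | sameAlcove p (basePt n f) (dotR p a (basePt n f))}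

/-- The stabilizer of the antidominant base alcove `w₀ · C₀`. -/
def OmegaV (n f p : ℕ) : Set (Wtf n f) :=
  {a | sameAlcove p (antiBasePt n f p) (dotR p a (antiBasePt n f p))}

/-- `a ∈ Wtf` acts via the dot action as the affine reflection in a single hyperplane. -/
def isRefl {n f : ℕ} (p : ℕ) (a : Wtf n f) : Prop :=
  ∃ (j : Fin f) (i k : Fin n) (m : ℤ), i < k ∧ ∀ x, dotR p a x = reflPt p j i k m x

/-- One step of the Bruhat order (relative to the base point `x`):
`u < r u` for `r` a reflection with `ℓ(u) < ℓ(r u)`. -/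
def bruhatStepFrom {n f : ℕ} (p : ℕ) (x : RPt n f) (u v : Wtf n f) : Prop :=
  ∃ r, isRefl p r ∧ v = Wtf.mul r u ∧ lenFrom p x u < lenFrom p x v

/-- The Bruhat order on `Wtf` relative to the base alcove with representative
point `x` and stabilizer `Ω`: on `Waf` it is generated by the reflection steps,
and is extended to `Wtf` by `u ω ≤ v ω` for `u ≤ v` in `Waf`, `ω ∈ Ω`. -/
def bruhatLEFrom {n f : ℕ} (p : ℕ) (x : RPt n f) (Om : Set (Wtf n f)) (a b : Wtf n f) : Prop :=
  ∃ u v ω, u ∈ Waf n f ∧ v ∈ Waf n f ∧ ω ∈ Om ∧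
    a = Wtf.mul u ω ∧ b = Wtf.mul v ω ∧
    Relation.ReflTransGen (bruhatStepFrom p x) u v

/-- The Bruhat order on `Wtf` relative to the dominant base alcove. -/
def bruhatLE {n f : ℕ} (p : ℕ) (a b : Wtf n f) : Prop :=
  bruhatLEFrom p (basePt n f) (Omegaf n f p) a b

/-- The Bruhat order on `Wtf` relative to the antidominant base alcove. -/
def bruhatLEV {n f : ℕ} (p : ℕ) (a b : Wtf n f) : Prop :=
  bruhatLEFrom p (antiBasePt n f p) (OmegaV n f p) a b

/-- The admissible set `Adm(λ) = {w̃ : w̃ ≤ t_{σ(λ)} for some σ ∈ Wf}` (dominant order). -/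
def Adm {n f : ℕ} (p : ℕ) (lam : Xf n f) : Set (Wtf n f) :=
  {a | ∃ σ : WfG n f, bruhatLE p a (transl (fun j => permAct (σ j) (lam j)))}

/-- The admissible set `Adm∨(λ)` (antidominant order). -/
def AdmV {n f : ℕ} (p : ℕ) (lam : Xf n f) : Set (Wtf n f) :=
  {a | ∃ σ : WfG n f, bruhatLEV p a (transl (fun j => permAct (σ j) (lam j)))}

/-- The anti-automorphism `w̃ = w t_ν ↦ w̃* = t_{ν*} w*` of `Wtf`, where
`(w*)_j = (w_{f-1-j})⁻¹` and `(ν*)_j = ν_{f-1-j}`. -/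
def wstar {n f : ℕ} (a : Wtf n f) : Wtf n f :=
  ⟨fun j => (a.w (Fin.rev j))⁻¹, fun j => permAct (a.w (Fin.rev j)) (a.t (Fin.rev j))⟩

/-- `ν ↦ ν*` on weights: `(ν*)_j = ν_{f-1-j}`. -/
def xstar {n f : ℕ} (lam : Xf n f) : Xf n f := fun j => lam (Fin.rev j)

/-- The cyclic shift `π` on weights: `(πν)_j = ν_{j-1}`. -/
def sh {n f : ℕ} (ν : Xf n f) : Xf n f := fun j => ν ((finRotate f)⁻¹ j)

/-- The cyclic shift `π` on `Wf`: `(πσ)_j = σ_{j-1}`. -/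
def shW {n f : ℕ} (σ : WfG n f) : WfG n f := fun j => σ ((finRotate f)⁻¹ j)

/-- The `Wf`-part of `^(ν,σ)(w, μ)`, namely `σ w π(σ)⁻¹`. -/
def conjW {n f : ℕ} (σ w : WfG n f) : WfG n f := fun j => σ j * w j * (shW σ j)⁻¹

/-- The `Xf`-part of `^(ν,σ)(w, μ)`, namely `σ(μ) + pν − σwπ(σ)⁻¹ π(ν)`. -/
def conjX {n f : ℕ} (p : ℕ) (ν : Xf n f) (σ w : WfG n f) (μ : Xf n f) : Xf n f :=
  fun j i => permAct (σ j) (μ j) i + (p : ℤ) * ν j i - permAct (conjW σ w j) (sh ν j) i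

/-- `(w, μ) ∼ (w', μ')`: `(w', μ') = ^(ν,σ)(w, μ)` for some `(ν, σ)`. -/
def pairEquiv {n f : ℕ} (p : ℕ) (w : WfG n f) (μ : Xf n f) (w' : WfG n f) (μ' : Xf n f) : Prop :=
  ∃ (ν : Xf n f) (σ : WfG n f), w' = conjW σ w ∧ μ' = conjX p ν σ w μ

/-- `λ` is m-deep in the base alcove `C₀`:
`m < ⟨λ_j + η₀, α^∨⟩ < p − m` for all `j` and positive coroots `α^∨`. -/
def deep {n f : ℕ} (p m : ℕ) (lam : Xf n f) : Prop :=
  ∀ (j : Fin f) (i k : Fin n), i < k →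
    (m : ℤ) < prZ lam j i k ∧ prZ lam j i k < (p : ℤ) - (m : ℤ)

/-- `λ` lies m-deep in its own p-alcove. -/
def deepInAlcove {n f : ℕ} (p m : ℕ) (lam : Xf n f) : Prop :=
  ∀ (j : Fin f) (i k : Fin n), i < k →
    ∃ N : ℤ, (p : ℤ) * N + (m : ℤ) < prZ lam j i k ∧
      prZ lam j i k < (p : ℤ) * (N + 1) - (m : ℤ)

/-- The p-restricted weights `X₁`. -/
def X1 (n f p : ℕ) : Set (Xf n f) :=
  {lam | ∀ (j : Fin f) (i : Fin n) (h : (i : ℕ) + 1 < n),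
    0 ≤ lam j i - lam j ⟨(i : ℕ) + 1, h⟩ ∧ lam j i - lam j ⟨(i : ℕ) + 1, h⟩ ≤ (p : ℤ) - 1}

/-- `X⁰`: weights pairing to 0 with every coroot. -/
def X0 (n f : ℕ) : Set (Xf n f) := {lam | ∀ (j : Fin f) (i k : Fin n), lam j i = lam j k}

/-- The alcove of the regular point `x` is dominant. -/
def dominantPt {n f : ℕ} (x : RPt n f) : Prop :=
  ∀ (j : Fin f) (i k : Fin n), i < k → 0 < prR x j i k

/-- The alcove of the regular point `x` is p-restricted. -/
def restrictedPt {n f : ℕ} (p : ℕ) (x : RPt n f) : Prop :=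
  ∀ (j : Fin f) (i : Fin n) (h : (i : ℕ) + 1 < n),
    0 < prR x j i ⟨(i : ℕ) + 1, h⟩ ∧ prR x j i ⟨(i : ℕ) + 1, h⟩ < (p : ℝ)

/-- `Wtf⁺`: the elements sending `C₀` to a dominant alcove under the dot action. -/
def WtfPlus (n f p : ℕ) : Set (Wtf n f) := {a | dominantPt (dotR p a (basePt n f))}

/-- One step of the up (↑) order on alcoves, via representative points:
stay in the same alcove, or apply a reflection across a hyperplane lying above. -/
def upStep {n f : ℕ} (p : ℕ) (x y : RPt n f) : Prop :=
  sameAlcove p x y ∨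
    ∃ (j : Fin f) (i k : Fin n) (m : ℤ), i < k ∧ prR x j i k < (p : ℝ) * (m : ℝ) ∧
      y = reflPt p j i k m x

/-- The up (↑) order on p-alcoves, via representative points. -/
def alcoveLE {n f : ℕ} (p : ℕ) (x y : RPt n f) : Prop :=
  Relation.ReflTransGen (upStep p) x y

/-- `w̃₁ ↑ w̃₂` on `Wtf`: `w̃₁ · C₀ ↑ w̃₂ · C₀` and `w̃₁, w̃₂` in the same right
`Waf`-coset. -/
def upOrd {n f : ℕ} (p : ℕ) (a b : Wtf n f) : Prop :=
  alcoveLE p (dotR p a (basePt n f)) (dotR p b (basePt n f)) ∧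
    Wtf.mul a (Wtf.inv b) ∈ Waf n f

/-- Realification of an integral weight. -/
def toR {n f : ℕ} (lam : Xf n f) : RPt n f := fun j i => ((lam j i : ℤ) : ℝ)

/-- The `Wf`-orbit of a point of `(ℝ^n)^f`. -/
def orbitR {n f : ℕ} (y : RPt n f) : Set (RPt n f) :=
  Set.range fun σ : WfG n f => fun j => permAct (σ j) (y j)

end LLLSerre

namespace LLLSerre

-- ############ new defs #############

/-- previous index in the cycle -/
def jp (f : ℕ) (j : Fin f) : Fin f := (finRotate f)⁻¹ j

/-- descent count: number of descents of `σ` among positions `< i` -/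
def dd (n : ℕ) (σ : Equiv.Perm (Fin n)) : ℕ → ℤ
  | 0 => 0
  | (i+1) => dd n σ i + if h : i+1 < n then
      (if σ ⟨i+1, h⟩ < σ ⟨i, Nat.lt_of_succ_lt h⟩ then 1 else 0) else 0

/-- the solution equation for `(σ, ν, λ)`:
`μ_j + η₀ = σ_j(λ_j + η₀) + p ν_j − s_j(ν_{j−1})` coordinatewise. -/
def Sol {n f : ℕ} (p : ℕ) (s : WfG n f) (μ : Xf n f) (σ : WfG n f) (ν : Xf n f)
    (lam : Xf n f) : Prop :=
  ∀ (j : Fin f) (i : Fin n),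
    μ j i + eta0 n i =
      (lam j ((σ j)⁻¹ i) + eta0 n ((σ j)⁻¹ i)) + (p : ℤ) * ν j i - ν (jp f j) ((s j)⁻¹ i)

/-- canonical ν for σ -/
def nuC {n f : ℕ} (σ : WfG n f) : Xf n f :=
  fun j a => dd n (σ j) (((σ j)⁻¹ a : Fin n) : ℕ)

/-- canonical λ for σ -/
def lamC {n f : ℕ} (p : ℕ) (s : WfG n f) (μ : Xf n f) (σ : WfG n f) : Xf n f :=
  fun j i => (μ j (σ j i) + eta0 n (σ j i)) + nuC σ (jp f j) ((s j)⁻¹ (σ j i))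
    - (p : ℤ) * dd n (σ j) ((i : Fin n) : ℕ) - eta0 n i

section Basic
variable {n f : ℕ}

lemma perm_apply_inv_self (e : Equiv.Perm (Fin n)) (x : Fin n) : e (e⁻¹ x) = x :=
  Equiv.apply_symm_apply e x

lemma perm_inv_apply_self (e : Equiv.Perm (Fin n)) (x : Fin n) : e⁻¹ (e x) = x :=
  Equiv.symm_apply_apply e x

lemma dd_nonneg (σ : Equiv.Perm (Fin n)) (i : ℕ) : 0 ≤ dd n σ i := by
  induction i with
  | zero => simp [dd]
  | succ i ih =>
    have : (0:ℤ) ≤ (if h : i+1 < n then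
      (if σ ⟨i+1, h⟩ < σ ⟨i, Nat.lt_of_succ_lt h⟩ then (1:ℤ) else 0) else 0) := by
      split <;> [skip; simp]
      split <;> simp
    simp only [dd]; omega

lemma dd_le (σ : Equiv.Perm (Fin n)) (i : ℕ) : dd n σ i ≤ i := by
  induction i with
  | zero => simp [dd]
  | succ i ih =>
    have : (if h : i+1 < n then
      (if σ ⟨i+1, h⟩ < σ ⟨i, Nat.lt_of_succ_lt h⟩ then (1:ℤ) else 0) else 0) ≤ 1 := by
      split <;> [skip; simp]
      split <;> simp
    simp only [dd]; push_cast; omega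

lemma dd_lt (σ : Equiv.Perm (Fin n)) (i : Fin n) : dd n σ (i : ℕ) ≤ (n:ℤ) - 1 := by
  have h1 := dd_le σ (i : ℕ)
  have := i.is_lt
  omega

lemma dd_zero (σ : Equiv.Perm (Fin n)) : dd n σ 0 = 0 := rfl

end Basic

section WithHyp
variable {n f p : ℕ} {s : WfG n f} {μ : Xf n f}

/-- pairwise B-estimates from deepness -/
lemma Bd_lb (hμ : deep p n μ) (j : Fin f) {a b : Fin n} (hab : a < b) :
    (n:ℤ) + 1 ≤ (μ j a + eta0 n a) - (μ j b + eta0 n b) := by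
  have := (hμ j a b hab).1
  unfold prZ at this; omega

lemma Bd_ub (hμ : deep p n μ) (j : Fin f) {a b : Fin n} (hab : a < b) :
    (μ j a + eta0 n a) - (μ j b + eta0 n b) ≤ (p:ℤ) - n - 1 := by
  have := (hμ j a b hab).2
  unfold prZ at this; omega

lemma hpn (hn : 2 ≤ n) (hμ : deep p n μ) (hf : 1 ≤ f) : (n:ℤ) + 1 ≤ (p:ℤ) - n - 1 := by
  have h0 : (0:ℕ) < n := by omega
  have h1 : (1:ℕ) < n := by omega
  have j : Fin f := ⟨0, hf⟩
  have hab : (⟨0, h0⟩ : Fin n) < ⟨1, h1⟩ := by simp [Fin.lt_def]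
  exact le_trans (Bd_lb hμ j hab) (Bd_ub hμ j hab)

/-- |Bv a − Bv b| ≤ p − n − 1 for all a b -/
lemma Bd_abs (hn : 2 ≤ n) (hf : 1 ≤ f) (hμ : deep p n μ) (j : Fin f) (a b : Fin n) :
    |(μ j a + eta0 n a) - (μ j b + eta0 n b)| ≤ (p:ℤ) - n - 1 := by
  have hpn' := hpn hn hμ hf
  rcases lt_trichotomy a b with h | h | h
  · have h1 := Bd_lb hμ j h; have h2 := Bd_ub hμ j h
    rw [abs_le]; constructor <;> omega
  · subst h; simp; omega
  · have h1 := Bd_lb hμ j h; have h2 := Bd_ub hμ j h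
    rw [abs_le]; constructor <;> omega

/-- a ≠ b ⟹ n+1 ≤ |Bv a − Bv b| -/
lemma Bd_sep (hμ : deep p n μ) (j : Fin f) {a b : Fin n} (hab : a ≠ b) :
    (n:ℤ) + 1 ≤ |(μ j a + eta0 n a) - (μ j b + eta0 n b)| := by
  rcases lt_trichotomy a b with h | h | h
  · have h1 := Bd_lb hμ j h
    have h2 : (0:ℤ) ≤ (n:ℤ) := by positivity
    rw [abs_of_nonneg (by omega)]; omega
  · exact absurd h hab
  · have h1 := Bd_lb hμ j h
    rw [abs_of_nonpos (by omega)]; omega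

end WithHyp
section Bridge
variable {n f p : ℕ} {s : WfG n f} {μ : Xf n f}

lemma sol_of_pair {w σ : WfG n f} {ν lam : Xf n f}
    (h1 : s = conjW σ w) (h2 : μ + etaf n f = conjX p ν σ w (lam + etaf n f)) :
    Sol p s μ σ ν lam := by
  intro j i
  have h := congrFun (congrFun h2 j) i
  have hc : conjW σ w j = s j := by rw [h1]
  simp only [conjX, permAct, Pi.add_apply, etaf, sh, hc] at h
  simpa [jp] using h

lemma pair_of_sol {σ : WfG n f} {ν lam : Xf n f} (h : Sol p s μ σ ν lam) :
    ∃ w : WfG n f, pairEquiv p w (lam + etaf n f) s (μ + etaf n f) := by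
  refine ⟨fun j => (σ j)⁻¹ * s j * σ (jp f j), ν, σ, ?_, ?_⟩
  · funext j
    simp only [conjW, shW]
    have : σ ((finRotate f)⁻¹ j) = σ (jp f j) := rfl
    rw [this]; group
  · funext j i
    have hc : conjW σ (fun j => (σ j)⁻¹ * s j * σ (jp f j)) j = s j := by
      simp only [conjW, shW]
      have : σ ((finRotate f)⁻¹ j) = σ (jp f j) := rfl
      rw [this]; group
    simp only [conjX, permAct, Pi.add_apply, etaf, sh, hc]
    have := h j i
    simp only [jp] at this ⊢
    omega
end Bridge
end LLLSerre
namespace LLLSerre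
section Constr
variable {n f p : ℕ} {s : WfG n f} {μ : Xf n f}

lemma nuC_nonneg (σ : WfG n f) (j : Fin f) (a : Fin n) : 0 ≤ nuC σ j a := dd_nonneg _ _
lemma nuC_le (σ : WfG n f) (j : Fin f) (a : Fin n) : nuC σ j a ≤ (n:ℤ) - 1 := dd_lt _ _

/-- the `u`-vector estimate for the canonical construction -/
lemma uC_mono (hμ : deep p n μ) (σ : WfG n f) (j : Fin f) {a b : Fin n} (hab : a < b) :
    2 ≤ ((μ j a + eta0 n a) + nuC σ (jp f j) ((s j)⁻¹ a))
        - ((μ j b + eta0 n b) + nuC σ (jp f j) ((s j)⁻¹ b)) ∧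
    ((μ j a + eta0 n a) + nuC σ (jp f j) ((s j)⁻¹ a))
        - ((μ j b + eta0 n b) + nuC σ (jp f j) ((s j)⁻¹ b)) ≤ (p:ℤ) - 2 := by
  have h1 := Bd_lb hμ j hab
  have h2 := Bd_ub hμ j hab
  have h3 := nuC_nonneg σ (jp f j) ((s j)⁻¹ a)
  have h4 := nuC_le σ (jp f j) ((s j)⁻¹ a)
  have h5 := nuC_nonneg σ (jp f j) ((s j)⁻¹ b)
  have h6 := nuC_le σ (jp f j) ((s j)⁻¹ b)
  omega

lemma lamC_eta (σ : WfG n f) (j : Fin f) (i : Fin n) :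
    lamC p s μ σ j i + eta0 n i = (μ j (σ j i) + eta0 n (σ j i))
      + nuC σ (jp f j) ((s j)⁻¹ (σ j i)) - (p:ℤ) * dd n (σ j) (i : ℕ) := by
  simp only [lamC]; ring

lemma lamC_Sol (σ : WfG n f) : Sol p s μ σ (nuC σ) (lamC p s μ σ) := by
  intro j i
  rw [lamC_eta]
  rw [perm_apply_inv_self]
  have : nuC σ j i = dd n (σ j) (((σ j)⁻¹ i : Fin n) : ℕ) := rfl
  rw [this]; ring

lemma lamC_X1 (hμ : deep p n μ) (σ : WfG n f) : lamC p s μ σ ∈ X1 n f p := by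
  intro j i h
  set i' : Fin n := ⟨(i : ℕ) + 1, h⟩ with hi'
  have hvi' : (i' : ℕ) = (i : ℕ) + 1 := rfl
  have heta : eta0 n i - eta0 n i' = 1 := by
    simp only [eta0, hi']; push_cast; ring
  have hdd : dd n (σ j) ((i:ℕ)+1) = dd n (σ j) (i:ℕ)
      + (if σ j i' < σ j i then 1 else 0) := by
    simp only [dd]
    rw [dif_pos h]
  have e1 := lamC_eta (p := p) (s := s) (μ := μ) σ j i
  have e2 := lamC_eta (p := p) (s := s) (μ := μ) σ j i'
  have hne : σ j i ≠ σ j i' := by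
    intro hcon
    have := (σ j).injective hcon
    rw [this] at hvi'
    omega
  by_cases hlt : σ j i' < σ j i
  · have hu := uC_mono (s := s) hμ σ j hlt
    rw [if_pos hlt] at hdd
    rw [hvi'] at e2  -- ensure dd argument matches
    rw [hdd] at e2
    constructor <;> nlinarith [e1, e2, hu.1, hu.2, heta]
  · have hlt' : σ j i < σ j i' := lt_of_le_of_ne (not_lt.mp hlt) hne
    have hu := uC_mono (s := s) hμ σ j hlt'
    rw [if_neg hlt] at hdd
    rw [hvi'] at e2
    rw [hdd] at e2
    constructor <;> nlinarith [e1, e2, hu.1, hu.2, heta]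

end Constr
end LLLSerre
namespace LLLSerre
section Rigid
variable {n f p : ℕ} {s : WfG n f} {μ : Xf n f} {σ : WfG n f} {ν lam : Xf n f}

lemma A_gap (hlam : lam ∈ X1 n f p) (j : Fin f) (i : Fin n) (h : (i:ℕ)+1 < n) :
    1 ≤ (lam j i + eta0 n i) - (lam j ⟨(i:ℕ)+1, h⟩ + eta0 n ⟨(i:ℕ)+1, h⟩) ∧
    (lam j i + eta0 n i) - (lam j ⟨(i:ℕ)+1, h⟩ + eta0 n ⟨(i:ℕ)+1, h⟩) ≤ (p:ℤ) := by
  have h1 := hlam j i h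
  have heta : eta0 n i - eta0 n ⟨(i:ℕ)+1, h⟩ = 1 := by
    simp only [eta0]; push_cast; ring
  omega

lemma A_pair (hlam : lam ∈ X1 n f p) (j : Fin f) :
    ∀ (k : ℕ) (x y : Fin n), (y:ℕ) = (x:ℕ) + k →
      (k:ℤ) ≤ (lam j x + eta0 n x) - (lam j y + eta0 n y) ∧
      (lam j x + eta0 n x) - (lam j y + eta0 n y) ≤ (p:ℤ) * k := by
  intro k
  induction k with
  | zero =>
    intro x y hxy
    have : x = y := Fin.ext (by omega)
    subst this; simp
  | succ k ih =>
    intro x y hxy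
    have hy : (y:ℕ) < n := y.is_lt
    have hk' : (x:ℕ) + k < n := by omega
    set y' : Fin n := ⟨(x:ℕ) + k, hk'⟩ with hy'
    have h1 := ih x y' rfl
    have h2 : (y':ℕ) + 1 < n := by simp [hy']; omega
    have hyy : (⟨(y':ℕ)+1, h2⟩ : Fin n) = y := Fin.ext (by simp [hy']; omega)
    have h3 := A_gap hlam j y' h2
    rw [hyy] at h3
    have hc : ((k:ℤ)+1) = ((k+1 : ℕ) : ℤ) := by push_cast; ring
    have hpc : (p:ℤ) * ((k+1 : ℕ) : ℤ) = (p:ℤ)*k + p := by push_cast; ring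
    constructor
    · rw [← hc] at *; linarith [h1.1, h3.1]
    · rw [hpc]; linarith [h1.2, h3.2]

lemma A_bound (hn : 2 ≤ n) (hf : 1 ≤ f) (hμ : deep p n μ) (hlam : lam ∈ X1 n f p)
    (j : Fin f) (x y : Fin n) :
    (lam j x + eta0 n x) - (lam j y + eta0 n y) ≤ (p:ℤ) * ((n:ℤ) - 1) := by
  have hp1 : (1:ℤ) ≤ (p:ℤ) := by have := hpn hn hμ hf; omega
  rcases le_or_gt (x:ℕ) (y:ℕ) with hc | hc
  · obtain ⟨k, hk⟩ : ∃ k, (y:ℕ) = (x:ℕ) + k := ⟨(y:ℕ) - (x:ℕ), by omega⟩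
    have h1 := (A_pair hlam j k x y hk).2
    have hkn : (k:ℤ) ≤ (n:ℤ) - 1 := by have := y.is_lt; omega
    have : (p:ℤ) * k ≤ (p:ℤ) * ((n:ℤ)-1) :=
      mul_le_mul_of_nonneg_left hkn (by linarith)
    linarith
  · obtain ⟨k, hk⟩ : ∃ k, (x:ℕ) = (y:ℕ) + k := ⟨(x:ℕ) - (y:ℕ), by omega⟩
    have h1 := (A_pair hlam j k y x hk).1
    have : (0:ℤ) ≤ (p:ℤ) * ((n:ℤ)-1) := by
      apply mul_nonneg (by linarith)
      have : (2:ℤ) ≤ (n:ℤ) := by exact_mod_cast hn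
      linarith
    have hk0 : (0:ℤ) ≤ (k:ℤ) := by positivity
    linarith

lemma nu_osc (hn : 2 ≤ n) (hf : 1 ≤ f) (hμ : deep p n μ) (hlam : lam ∈ X1 n f p)
    (hS : Sol p s μ σ ν lam) :
    ∀ (j : Fin f) (a b : Fin n), ν j a - ν j b ≤ (n:ℤ) - 1 := by
  have hp1 : (2:ℤ) ≤ (p:ℤ) := by have := hpn hn hμ hf; omega
  haveI : Nonempty (Fin f) := ⟨⟨0, hf⟩⟩
  haveI : Nonempty (Fin n) := ⟨⟨0, by omega⟩⟩
  set T := Finset.image (fun q : Fin f × Fin n × Fin n => ν q.1 q.2.1 - ν q.1 q.2.2)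
    Finset.univ with hT
  have hTne : T.Nonempty := Finset.Nonempty.image Finset.univ_nonempty _
  set K := T.max' hTne with hK
  have hle : ∀ (j : Fin f) (a b : Fin n), ν j a - ν j b ≤ K := by
    intro j a b
    apply Finset.le_max'
    rw [hT]
    exact Finset.mem_image_of_mem _ (Finset.mem_univ (j,(a,b)))
  suffices hfin : K ≤ (n:ℤ) - 1 by
    intro j a b; exact (hle j a b).trans hfin
  obtain ⟨q, -, hq⟩ := Finset.mem_image.mp (T.max'_mem hTne)
  obtain ⟨j, a, b⟩ := q
  simp only at hq
  have h1 := hS j a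
  have h2 := hS j b
  have hA := A_bound hn hf hμ hlam j ((σ j)⁻¹ b) ((σ j)⁻¹ a)
  have hBv : (μ j a + eta0 n a) - (μ j b + eta0 n b) ≤ (p:ℤ) - n - 1 :=
    le_trans (le_abs_self _) (Bd_abs hn hf hμ j a b)
  have hnu2 := hle (jp f j) ((s j)⁻¹ a) ((s j)⁻¹ b)
  have hpK : (p:ℤ) * K ≤ K + ((n:ℤ)*(p:ℤ) - (n:ℤ) - 1) := by
    have hm : (p:ℤ)*K = (p:ℤ) * ν j a - (p:ℤ) * ν j b := by rw [hK, ← hq]; ring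
    have hexp : (p:ℤ) * ((n:ℤ) - 1) = (n:ℤ)*(p:ℤ) - (p:ℤ) := by ring
    linarith [h1, h2, hA, hBv, hnu2]
  by_contra hcon
  push_neg at hcon
  have hKn : (n:ℤ) ≤ K := by omega
  have h5 : ((p:ℤ)-1) * (n:ℤ) ≤ ((p:ℤ)-1) * K :=
    mul_le_mul_of_nonneg_left hKn (by linarith)
  nlinarith [hpK, h5]

end Rigid
end LLLSerre
namespace LLLSerre
section Rigid2
variable {n f p : ℕ} {s : WfG n f} {μ : Xf n f} {σ : WfG n f} {ν lam : Xf n f}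

/-- the `u`-vector estimate in an arbitrary solution -/
lemma uS_mono (hn : 2 ≤ n) (hf : 1 ≤ f) (hμ : deep p n μ) (hlam : lam ∈ X1 n f p)
    (hS : Sol p s μ σ ν lam) (j : Fin f) {a b : Fin n} (hab : a < b) :
    2 ≤ ((μ j a + eta0 n a) + ν (jp f j) ((s j)⁻¹ a))
        - ((μ j b + eta0 n b) + ν (jp f j) ((s j)⁻¹ b)) ∧
    ((μ j a + eta0 n a) + ν (jp f j) ((s j)⁻¹ a))
        - ((μ j b + eta0 n b) + ν (jp f j) ((s j)⁻¹ b)) ≤ (p:ℤ) - 2 := by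
  have h1 := Bd_lb hμ j hab
  have h2 := Bd_ub hμ j hab
  have h3 := nu_osc hn hf hμ hlam hS (jp f j) ((s j)⁻¹ a) ((s j)⁻¹ b)
  have h4 := nu_osc hn hf hμ hlam hS (jp f j) ((s j)⁻¹ b) ((s j)⁻¹ a)
  omega

/-- A-form of the solution equation -/
lemma Aform (hS : Sol p s μ σ ν lam) (j : Fin f) (i : Fin n) :
    lam j i + eta0 n i = (μ j (σ j i) + eta0 n (σ j i))
      + ν (jp f j) ((s j)⁻¹ (σ j i)) - (p:ℤ) * ν j (σ j i) := by
  have h := hS j (σ j i)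
  rw [perm_inv_apply_self] at h
  omega

lemma rigid_step (hn : 2 ≤ n) (hf : 1 ≤ f) (hμ : deep p n μ) (hlam : lam ∈ X1 n f p)
    (hS : Sol p s μ σ ν lam) (j : Fin f) (i : Fin n) (h : (i:ℕ)+1 < n) :
    ν j (σ j ⟨(i:ℕ)+1, h⟩) = ν j (σ j i)
      + (if σ j ⟨(i:ℕ)+1, h⟩ < σ j i then 1 else 0) := by
  have hp1 : (2:ℤ) ≤ (p:ℤ) := by have := hpn hn hμ hf; omega
  set i' : Fin n := ⟨(i:ℕ)+1, h⟩ with hi'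
  have hg := A_gap hlam j i h
  rw [← hi'] at hg
  have e1 := Aform hS j i
  have e2 := Aform hS j i'
  have hne : σ j i ≠ σ j i' := by
    intro hcon
    have := (σ j).injective hcon
    have : (i:ℕ) = (i':ℕ) := by rw [this]
    simp [hi'] at this
  set t := ν j (σ j i) - ν j (σ j i') with ht
  have hpt : (p:ℤ) * t = (p:ℤ) * ν j (σ j i) - (p:ℤ) * ν j (σ j i') := by rw [ht]; ring
  by_cases hlt : σ j i' < σ j i
  · have hu := uS_mono hn hf hμ hlam hS j hlt
    rw [if_pos hlt]
    have ht1 : t ≤ -1 := by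
      by_contra hcon
      push_neg at hcon
      have h0 : 0 ≤ t := by omega
      have : 0 ≤ (p:ℤ) * t := mul_nonneg (by linarith) h0
      linarith [hg.1, hu.1, e1, e2, hpt]
    have ht2 : -1 ≤ t := by
      by_contra hcon
      push_neg at hcon
      have h0 : t ≤ -2 := by omega
      have : (p:ℤ) * t ≤ (p:ℤ) * (-2) := mul_le_mul_of_nonneg_left h0 (by linarith)
      linarith [hg.2, hu.2, e1, e2, hpt]
    omega
  · have hlt' : σ j i < σ j i' := lt_of_le_of_ne (not_lt.mp hlt) hne
    have hu := uS_mono hn hf hμ hlam hS j hlt'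
    rw [if_neg hlt]
    have ht1 : t ≤ 0 := by
      by_contra hcon
      push_neg at hcon
      have h0 : 1 ≤ t := by omega
      have : (p:ℤ) * 1 ≤ (p:ℤ) * t := mul_le_mul_of_nonneg_left h0 (by linarith)
      linarith [hg.1, hu.2, e1, e2, hpt]
    have ht2 : 0 ≤ t := by
      by_contra hcon
      push_neg at hcon
      have h0 : t ≤ -1 := by omega
      have : (p:ℤ) * t ≤ (p:ℤ) * (-1) := mul_le_mul_of_nonneg_left h0 (by linarith)
      linarith [hg.2, hu.1, e1, e2, hpt]
    omega

lemma rigid (hn : 2 ≤ n) (hf : 1 ≤ f) (hμ : deep p n μ) (hlam : lam ∈ X1 n f p)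
    (hS : Sol p s μ σ ν lam) (j : Fin f) :
    ∀ (k : ℕ) (hk : k < n),
      ν j (σ j ⟨k, hk⟩) = ν j (σ j ⟨0, by omega⟩)
        + dd n (σ j) k := by
  intro k
  induction k with
  | zero => intro hk; simp [dd]
  | succ k ih =>
    intro hk
    have hk' : k < n := Nat.lt_of_succ_lt hk
    have step := rigid_step hn hf hμ hlam hS j ⟨k, hk'⟩ hk
    have hdd : dd n (σ j) (k+1) = dd n (σ j) k
        + (if σ j ⟨k+1, hk⟩ < σ j ⟨k, hk'⟩ then 1 else 0) := by
      simp only [dd]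
      rw [dif_pos hk]
    rw [hdd]
    rw [step]
    rw [ih hk']
    ring

/-- every solution's ν has the canonical descent form -/
lemma nu_form (hn : 2 ≤ n) (hf : 1 ≤ f) (hμ : deep p n μ) (hlam : lam ∈ X1 n f p)
    (hS : Sol p s μ σ ν lam) (j : Fin f) (a : Fin n) :
    ν j a = ν j (σ j ⟨0, by omega⟩)
      + dd n (σ j) (((σ j)⁻¹ a : Fin n) : ℕ) := by
  have h := rigid hn hf hμ hlam hS j (((σ j)⁻¹ a : Fin n) : ℕ) (Fin.is_lt _)
  rw [show (⟨(((σ j)⁻¹ a : Fin n) : ℕ), Fin.is_lt _⟩ : Fin n) = (σ j)⁻¹ a from rfl] at h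
  rw [perm_apply_inv_self] at h
  exact h

/-- canonical-form lemma: every solution differs from `lamC σ` by a constant
of the form `c_{j-1} − p c_j`. -/
lemma sol_canon (hn : 2 ≤ n) (hf : 1 ≤ f) (hμ : deep p n μ) (hlam : lam ∈ X1 n f p)
    (hS : Sol p s μ σ ν lam) (j : Fin f) (i : Fin n) :
    lam j i - lamC p s μ σ j i =
      ν (jp f j) (σ (jp f j) ⟨0, by omega⟩)
        - (p:ℤ) * ν j (σ j ⟨0, by omega⟩) := by
  have e1 := Aform hS j i
  have e2 := lamC_eta (p := p) (s := s) (μ := μ) σ j i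
  have h3 := nu_form hn hf hμ hlam hS (jp f j) ((s j)⁻¹ (σ j i))
  have h4 := nu_form hn hf hμ hlam hS j (σ j i)
  rw [perm_inv_apply_self] at h4
  have hnuC : nuC σ (jp f j) ((s j)⁻¹ (σ j i))
      = dd n (σ (jp f j)) (((σ (jp f j))⁻¹ ((s j)⁻¹ (σ j i)) : Fin n) : ℕ) := rfl
  rw [hnuC] at e2
  have h4' : (p:ℤ) * ν j (σ j i) = (p:ℤ) * ν j (σ j ⟨0, by omega⟩)
      + (p:ℤ) * dd n (σ j) (i : ℕ) := by rw [h4]; ring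
  linarith [e1, e2, h3, h4']

end Rigid2
end LLLSerre
namespace LLLSerre
section Ident
variable {n f p : ℕ} {s : WfG n f} {μ : Xf n f} {σ σ' : WfG n f} {ν ν' lam : Xf n f}

set_option maxHeartbeats 1000000 in
/-- a p-restricted weight determines the `σ` of any solution -/
lemma sigma_unique (hn : 2 ≤ n) (hf : 1 ≤ f) (hμ : deep p n μ) (hlam : lam ∈ X1 n f p)
    (hS : Sol p s μ σ ν lam) (hS' : Sol p s μ σ' ν' lam) : σ = σ' := by
  have hp1 : (2:ℤ) ≤ (p:ℤ) := by have := hpn hn hμ hf; omega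
  haveI : Nonempty (Fin f) := ⟨⟨0, hf⟩⟩
  set z : Fin n := ⟨0, by omega⟩ with hz
  set c : Fin f → ℤ := fun j => ν j (σ j z) with hc
  set c' : Fin f → ℤ := fun j => ν' j (σ' j z) with hc'
  -- the basic comparison equation, any i
  have heq : ∀ (j : Fin f) (i : Fin n),
      (p:ℤ) * ν j (σ j i) - (p:ℤ) * ν' j (σ' j i) =
        ((μ j (σ j i) + eta0 n (σ j i)) - (μ j (σ' j i) + eta0 n (σ' j i)))
        + (ν (jp f j) ((s j)⁻¹ (σ j i)) - ν' (jp f j) ((s j)⁻¹ (σ' j i))) := by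
    intro j i
    have e1 := Aform hS j i
    have e2 := Aform hS' j i
    linarith
  -- nu-forms
  have hν : ∀ (j : Fin f) (a : Fin n), ν j a = c j + dd n (σ j) (((σ j)⁻¹ a : Fin n) : ℕ) :=
    fun j a => nu_form hn hf hμ hlam hS j a
  have hν' : ∀ (j : Fin f) (a : Fin n), ν' j a = c' j + dd n (σ' j) (((σ' j)⁻¹ a : Fin n) : ℕ) :=
    fun j a => nu_form hn hf hμ hlam hS' j a
  have hcz : ∀ j : Fin f, ν j (σ j z) = c j := fun j => rfl
  have hcz' : ∀ j : Fin f, ν' j (σ' j z) = c' j := fun j => rfl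
  -- dd at argument coming from z is 0
  have hBabs := fun (j : Fin f) (a b : Fin n) => Bd_abs hn hf hμ j a b
  -- step 1 : the constants agree
  have hstep : ∀ j : Fin f, |(p:ℤ) * (c j - c' j)| ≤ |c (jp f j) - c' (jp f j)| + (p:ℤ) - 2 := by
    intro j
    have h0 := heq j z
    rw [hcz j, hcz' j] at h0
    set x1 := ν (jp f j) ((s j)⁻¹ (σ j z)) with hx1
    set x2 := ν' (jp f j) ((s j)⁻¹ (σ' j z)) with hx2
    have hX1 : x1 = c (jp f j) + dd n (σ (jp f j)) (((σ (jp f j))⁻¹ ((s j)⁻¹ (σ j z)) : Fin n) : ℕ) :=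
      hν (jp f j) _
    have hX2 : x2 = c' (jp f j) + dd n (σ' (jp f j)) (((σ' (jp f j))⁻¹ ((s j)⁻¹ (σ' j z)) : Fin n) : ℕ) :=
      hν' (jp f j) _
    have hd1a := dd_nonneg (σ (jp f j)) (((σ (jp f j))⁻¹ ((s j)⁻¹ (σ j z)) : Fin n) : ℕ)
    have hd1b := dd_lt (σ (jp f j)) (((σ (jp f j))⁻¹ ((s j)⁻¹ (σ j z)) : Fin n))
    have hd2a := dd_nonneg (σ' (jp f j)) (((σ' (jp f j))⁻¹ ((s j)⁻¹ (σ' j z)) : Fin n) : ℕ)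
    have hd2b := dd_lt (σ' (jp f j)) (((σ' (jp f j))⁻¹ ((s j)⁻¹ (σ' j z)) : Fin n))
    have hBa := hBabs j (σ j z) (σ' j z)
    have hB1 := (abs_le.mp hBa).1
    have hB2 := (abs_le.mp hBa).2
    have hg1 := le_abs_self (c (jp f j) - c' (jp f j))
    have hg2 := neg_abs_le (c (jp f j) - c' (jp f j))
    have hmul : (p:ℤ) * (c j - c' j) = (p:ℤ) * c j - (p:ℤ) * c' j := by ring
    rw [abs_le]
    constructor <;> [skip; skip] <;>
      · rw [hmul]
        have hcc : (p:ℤ) * c j - (p:ℤ) * c' j =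
            ((μ j (σ j z) + eta0 n (σ j z)) - (μ j (σ' j z) + eta0 n (σ' j z)))
            + (x1 - x2) := h0
        rw [hcc, hX1, hX2]
        linarith
  -- maximum of |γ|
  set T2 := Finset.image (fun j : Fin f => |c j - c' j|) Finset.univ with hT2
  have hT2ne : T2.Nonempty := Finset.Nonempty.image Finset.univ_nonempty _
  set G := T2.max' hT2ne with hG
  have hleG : ∀ j : Fin f, |c j - c' j| ≤ G := by
    intro j
    apply Finset.le_max'
    rw [hT2]
    exact Finset.mem_image_of_mem _ (Finset.mem_univ j)
  have hγ0 : ∀ j : Fin f, c j = c' j := by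
    obtain ⟨j0, -, hj0⟩ := Finset.mem_image.mp (T2.max'_mem hT2ne)
    have hGnn : 0 ≤ G := by rw [hG, ← hj0]; positivity
    have hkey := hstep j0
    rw [abs_mul, abs_of_nonneg (by linarith : (0:ℤ) ≤ (p:ℤ)), hj0] at hkey
    have hG2 := hleG (jp f j0)
    have hGle : G ≤ 0 := by
      by_contra hcon
      push_neg at hcon
      have hG1 : 1 ≤ G := by omega
      have := mul_le_mul_of_nonneg_left hG1 (by linarith : (0:ℤ) ≤ (p:ℤ) - 1)
      nlinarith
    intro j
    have := hleG j
    have habs : |c j - c' j| = 0 := le_antisymm (this.trans hGle) (abs_nonneg _)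
    have := abs_eq_zero.mp habs
    omega
  -- step 2 : the permutations agree
  funext j
  apply Equiv.ext
  intro i
  have h0 := heq j i
  have hν1 : ν j (σ j i) = c j + dd n (σ j) (i : ℕ) := by
    have := hν j (σ j i)
    rwa [perm_inv_apply_self] at this
  have hν2 : ν' j (σ' j i) = c' j + dd n (σ' j) (i : ℕ) := by
    have := hν' j (σ' j i)
    rwa [perm_inv_apply_self] at this
  have hX1 := hν (jp f j) ((s j)⁻¹ (σ j i))
  have hX2 := hν' (jp f j) ((s j)⁻¹ (σ' j i))
  have hd1a := dd_nonneg (σ (jp f j)) (((σ (jp f j))⁻¹ ((s j)⁻¹ (σ j i)) : Fin n) : ℕ)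
  have hd1b := dd_lt (σ (jp f j)) (((σ (jp f j))⁻¹ ((s j)⁻¹ (σ j i)) : Fin n))
  have hd2a := dd_nonneg (σ' (jp f j)) (((σ' (jp f j))⁻¹ ((s j)⁻¹ (σ' j i)) : Fin n) : ℕ)
  have hd2b := dd_lt (σ' (jp f j)) (((σ' (jp f j))⁻¹ ((s j)⁻¹ (σ' j i)) : Fin n))
  have hda := dd_nonneg (σ j) (i : ℕ)
  have hdb := dd_lt (σ j) i
  have hda' := dd_nonneg (σ' j) (i : ℕ)
  have hdb' := dd_lt (σ' j) i
  have hBa := hBabs j (σ j i) (σ' j i)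
  have hB1 := (abs_le.mp hBa).1
  have hB2 := (abs_le.mp hBa).2
  have hcj := hγ0 j
  have hcjp := hγ0 (jp f j)
  -- p * (dd − dd') = Bdiff + (D1 − D2)
  set t := dd n (σ j) (i : ℕ) - dd n (σ' j) (i : ℕ) with htdef
  have hpt : (p:ℤ) * t = ((μ j (σ j i) + eta0 n (σ j i)) - (μ j (σ' j i) + eta0 n (σ' j i)))
      + (dd n (σ (jp f j)) (((σ (jp f j))⁻¹ ((s j)⁻¹ (σ j i)) : Fin n) : ℕ)
        - dd n (σ' (jp f j)) (((σ' (jp f j))⁻¹ ((s j)⁻¹ (σ' j i)) : Fin n) : ℕ)) := by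
    have hexp1 : (p:ℤ) * ν j (σ j i) = (p:ℤ) * c j + (p:ℤ) * dd n (σ j) (i : ℕ) := by
      rw [hν1]; ring
    have hexp2 : (p:ℤ) * ν' j (σ' j i) = (p:ℤ) * c' j + (p:ℤ) * dd n (σ' j) (i : ℕ) := by
      rw [hν2]; ring
    have hexp3 : (p:ℤ) * t = (p:ℤ) * dd n (σ j) (i : ℕ) - (p:ℤ) * dd n (σ' j) (i : ℕ) := by
      rw [htdef]; ring
    have hpc : (p:ℤ) * c j = (p:ℤ) * c' j := by rw [hcj]
    linarith [h0, hX1, hX2]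
  have ht0 : t = 0 := by
    rcases lt_trichotomy t 0 with hcase | hcase | hcase
    · have h1 : t ≤ -1 := by omega
      have := mul_le_mul_of_nonneg_left h1 (by linarith : (0:ℤ) ≤ (p:ℤ))
      nlinarith
    · exact hcase
    · have h1 : 1 ≤ t := by omega
      have := mul_le_mul_of_nonneg_left h1 (by linarith : (0:ℤ) ≤ (p:ℤ))
      nlinarith
  by_contra hne
  have hsep := Bd_sep hμ j hne
  rw [ht0] at hpt
  rcases abs_cases ((μ j (σ j i) + eta0 n (σ j i)) - (μ j (σ' j i) + eta0 n (σ' j i))) with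
    ⟨he, -⟩ | ⟨he, -⟩ <;> · rw [he] at hsep; omega

end Ident
end LLLSerre
namespace LLLSerre
section Assemble
variable {n f p : ℕ} {s : WfG n f} {μ : Xf n f} {σ : WfG n f} {ν lam : Xf n f}

lemma sol_shift {ξ : Xf n f} (hξ : ξ ∈ X0 n f) (hS : Sol p s μ σ ν lam) :
    Sol p s μ σ (fun j a => ν j a - ξ j a)
      (fun j i => lam j i + ((p:ℤ) * ξ j i - ξ (jp f j) i)) := by
  intro j i
  have h := hS j i
  have h1 : ξ j ((σ j)⁻¹ i) = ξ j i := hξ j _ _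
  have h2 : ξ (jp f j) ((σ j)⁻¹ i) = ξ (jp f j) ((s j)⁻¹ i) := hξ (jp f j) _ _
  simp only
  rw [h1, h2]
  linear_combination h

lemma canon_rel (hn : 2 ≤ n) (hf : 1 ≤ f) (hμ : deep p n μ) (hlam : lam ∈ X1 n f p)
    (hS : Sol p s μ σ ν lam) :
    ∃ ξ ∈ X0 n f, lamC p s μ σ - lam = (p:ℤ) • ξ - sh ξ := by
  refine ⟨fun j _ => ν j (σ j ⟨0, by omega⟩), fun j i k => rfl, ?_⟩
  funext j i
  have h := sol_canon hn hf hμ hlam hS j i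
  simp only [Pi.sub_apply, Pi.smul_apply, smul_eq_mul, sh]
  have hjp : ((finRotate f)⁻¹ j) = jp f j := rfl
  rw [hjp]
  linarith [h]

end Assemble


/-- for `μ` n-deep in `C₀` and `s ∈ Wf`, the set of p-restricted
weights `λ` with `(w, λ + η) ∼ (s, μ + η)` for some `w ∈ Wf`, taken modulo
`λ ≡ λ'` iff `λ − λ' ∈ (p − π)X⁰`, has exactly `(n!)^f` elements. -/
theorem statement4 (n f p : ℕ) (hn : 2 ≤ n) (hf : 1 ≤ f) (hp : p.Prime) (hnp : n < p)
    (s : WfG n f) (μ : Xf n f) (hμ : deep p n μ) :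
    Nat.card (Quot (fun (a b : {lam : Xf n f //
        lam ∈ X1 n f p ∧ ∃ w : WfG n f, pairEquiv p w (lam + etaf n f) s (μ + etaf n f)}) =>
      ∃ ξ ∈ X0 n f, a.1 - b.1 = (p : ℤ) • ξ - sh ξ)) = n.factorial ^ f := by
  classical
  set r : {lam : Xf n f //
      lam ∈ X1 n f p ∧ ∃ w : WfG n f, pairEquiv p w (lam + etaf n f) s (μ + etaf n f)} →
      {lam : Xf n f //
      lam ∈ X1 n f p ∧ ∃ w : WfG n f, pairEquiv p w (lam + etaf n f) s (μ + etaf n f)} →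
      Prop :=
    fun a b => ∃ ξ ∈ X0 n f, a.1 - b.1 = (p : ℤ) • ξ - sh ξ with hr
  have hsol : ∀ x : {lam : Xf n f //
      lam ∈ X1 n f p ∧ ∃ w : WfG n f, pairEquiv p w (lam + etaf n f) s (μ + etaf n f)},
      ∃ σc : WfG n f, ∃ νc : Xf n f, Sol p s μ σc νc x.1 := by
    intro x
    obtain ⟨w, ν0, σ0, h1, h2⟩ := x.2.2
    exact ⟨σ0, ν0, sol_of_pair h1 h2⟩
  choose σfun νfun hσν using hsol
  have hlift : ∀ a b, r a b → σfun a = σfun b := by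
    rintro a b ⟨ξ, hξ, hab⟩
    have ha : a.1 = fun j i => b.1 j i + ((p:ℤ) * ξ j i - ξ (jp f j) i) := by
      funext j i
      have h := congrFun (congrFun hab j) i
      simp only [Pi.sub_apply, Pi.smul_apply, smul_eq_mul, sh] at h
      have hjp : ((finRotate f)⁻¹ j) = jp f j := rfl
      rw [hjp] at h
      linarith
    have hS2 : Sol p s μ (σfun b) (fun j a_ => νfun b j a_ - ξ j a_) a.1 := by
      rw [ha]; exact sol_shift hξ (hσν b)
    exact sigma_unique hn hf hμ a.2.1 (hσν a) hS2
  set Gm : WfG n f → Quot r := fun σc =>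
    Quot.mk r ⟨lamC p s μ σc, lamC_X1 hμ σc, pair_of_sol (lamC_Sol σc)⟩ with hGm
  have hFG : ∀ σc, Quot.lift σfun hlift (Gm σc) = σc := by
    intro σc
    exact sigma_unique hn hf hμ (lamC_X1 hμ σc) (hσν _) (lamC_Sol σc)
  have hGF : ∀ q, Gm (Quot.lift σfun hlift q) = q := by
    apply Quot.ind
    intro x
    show Gm (σfun x) = Quot.mk r x
    rw [hGm]
    apply Quot.sound
    show r _ x
    rw [hr]
    exact canon_rel hn hf hμ x.2.1 (hσν x)
  have e : Quot r ≃ WfG n f := ⟨Quot.lift σfun hlift, Gm, hGF, hFG⟩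
  rw [Nat.card_congr e]
  rw [Nat.card_pi]
  simp [Nat.card_eq_fintype_card, Fintype.card_perm, Fintype.card_fin]


end LLLSerre
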